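/- Let Δ be a signed incidence matrix with m rows and n columns (entries in {−1,0,1}, each column having exactly one +1 and one −1) whose underlying graph is connected, viewed as an integer matrix. Then there exist an invertible matrix U ∈ GL(m,ℤ) and an invertible matrix V ∈ GL(n,ℤ), such that U, V, U⁻¹ and V⁻¹ all have entries in {−1,0,1}, and U·Δ·V is the Smith normal form whose (i,i) entries equal 1 for i = 1,…,m−1 and all other entries equal 0. -/

import Mathlib

namespace SNFAux

def pathvec (par : ℕ → ℕ) (s : ℕ → ℤ) : ℕ → ℕ → ℤ
  | 0 => fun _ => 0
  | q + 1 => fun k =>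
      pathvec par s (min (par (q + 1)) q) k + if k = q + 1 then s (q + 1) else 0
  decreasing_by exact Nat.lt_succ_of_le (min_le_right _ _)

lemma pathvec_zero (par : ℕ → ℕ) (s : ℕ → ℤ) (k : ℕ) : pathvec par s 0 k = 0 := by rw [pathvec]

lemma pathvec_succ (par : ℕ → ℕ) (s : ℕ → ℤ) (q k : ℕ) :
    pathvec par s (q + 1) k =
      pathvec par s (min (par (q + 1)) q) k + if k = q + 1 then s (q + 1) else 0 := by
  rw [pathvec]

lemma pathvec_eq_zero_of_lt (par : ℕ → ℕ) (s : ℕ → ℤ) :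
    ∀ q k, q < k → pathvec par s q k = 0 := by
  intro q
  induction q using Nat.strong_induction_on with
  | _ q ih =>
    match q with
    | 0 => intro k _; exact pathvec_zero par s k
    | q + 1 =>
      intro k hk
      have hmin := min_le_right (par (q + 1)) q
      rw [pathvec_succ, ih _ (by omega) k (by omega), if_neg (by omega), add_zero]

lemma pathvec_mem (par : ℕ → ℕ) (s : ℕ → ℤ) :
    ∀ q k, pathvec par s q k = 0 ∨ pathvec par s q k = s k := by
  intro q
  induction q using Nat.strong_induction_on with
  | _ q ih =>
    match q with
    | 0 => intro k; left; exact pathvec_zero par s k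
    | q + 1 =>
      intro k
      have hmin := min_le_right (par (q + 1)) q
      rw [pathvec_succ]
      by_cases hk : k = q + 1
      · subst hk
        rw [pathvec_eq_zero_of_lt _ _ _ _ (by omega), if_pos rfl, zero_add]
        right; rfl
      · rw [if_neg hk, add_zero]
        exact ih _ (by omega) k

lemma pathvec_step (par : ℕ → ℕ) (s : ℕ → ℤ) (q : ℕ) (hq : 0 < q) (hpar : par q < q) (k : ℕ) :
    pathvec par s q k = pathvec par s (par q) k + if k = q then s q else 0 := by
  obtain ⟨q', rfl⟩ : ∃ q', q = q' + 1 := ⟨q - 1, by omega⟩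
  rw [pathvec_succ, min_eq_left (by omega)]

lemma exists_cross_edge {α : Type*} {G : SimpleGraph α} {S : Set α} :
    ∀ {x y : α}, G.Walk x y → x ∈ S → y ∉ S → ∃ u v, u ∈ S ∧ v ∉ S ∧ G.Adj u v := by
  intro x y w
  induction w with
  | nil => intro h h'; exact absurd h h'
  | @cons a b c h p ih =>
    intro hx hy
    by_cases hb : b ∈ S
    · exact ih hb hy
    · exact ⟨a, b, hx, hb, h⟩

lemma mem3 {z : ℤ} (h : z = -1 ∨ z = 0 ∨ z = 1) : z ∈ ({-1, 0, 1} : Set ℤ) := by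
  simp only [Set.mem_insert_iff, Set.mem_singleton_iff]; tauto

end SNFAux

set_option maxHeartbeats 1000000 in
open SNFAux in
/-- A connected signed incidence matrix Δ (m rows, n columns, over
ℤ, each column containing exactly one +1 and one −1) admits a Smith normal
form U·Δ·V where U ∈ GL(m,ℤ) and V ∈ GL(n,ℤ) are such that U, V, U⁻¹ and V⁻¹
are all signed boolean (entries in {−1,0,1}), and U·Δ·V has its first m − 1
diagonal entries equal to 1 and all other entries equal to 0. -/
theorem smith_normal_form_of_connected_signed_incidence
    (m n : ℕ) (Δ : Matrix (Fin m) (Fin n) ℤ)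
    (hinc : ∀ e : Fin n, ∃ t₁ t₂ : Fin m, t₁ ≠ t₂ ∧ Δ t₁ e = 1 ∧ Δ t₂ e = -1 ∧
      ∀ t : Fin m, t ≠ t₁ → t ≠ t₂ → Δ t e = 0)
    (hconn : (SimpleGraph.fromRel
      (fun t t' : Fin m => ∃ e : Fin n, Δ t e ≠ 0 ∧ Δ t' e ≠ 0)).Connected) :
    ∃ (U : Matrix.GeneralLinearGroup (Fin m) ℤ)
      (V : Matrix.GeneralLinearGroup (Fin n) ℤ),
      (∀ i j, (U : Matrix (Fin m) (Fin m) ℤ) i j ∈ ({-1, 0, 1} : Set ℤ)) ∧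
      (∀ i j, ((U⁻¹ : Matrix.GeneralLinearGroup (Fin m) ℤ) :
        Matrix (Fin m) (Fin m) ℤ) i j ∈ ({-1, 0, 1} : Set ℤ)) ∧
      (∀ i j, (V : Matrix (Fin n) (Fin n) ℤ) i j ∈ ({-1, 0, 1} : Set ℤ)) ∧
      (∀ i j, ((V⁻¹ : Matrix.GeneralLinearGroup (Fin n) ℤ) :
        Matrix (Fin n) (Fin n) ℤ) i j ∈ ({-1, 0, 1} : Set ℤ)) ∧
      (U : Matrix (Fin m) (Fin m) ℤ) * Δ * (V : Matrix (Fin n) (Fin n) ℤ) =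
        Matrix.of (fun (i : Fin m) (j : Fin n) =>
          if (i : ℕ) = (j : ℕ) ∧ (i : ℕ) < m - 1 then (1 : ℤ) else 0) := by
  classical
  have hm : 0 < m := by
    obtain ⟨x⟩ := hconn.nonempty
    exact x.pos
  have hΔmem : ∀ (x : Fin m) (e : Fin n), Δ x e = -1 ∨ Δ x e = 0 ∨ Δ x e = 1 := by
    intro x e
    obtain ⟨t₁, t₂, hne, h1, h2, h0⟩ := hinc e
    rcases eq_or_ne x t₁ with rfl | hx1
    · right; right; exact h1
    rcases eq_or_ne x t₂ with rfl | hx2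
    · left; exact h2
    · right; left; exact h0 x hx1 hx2
  choose a b hab ha hb h0 using hinc
  have hsupp : ∀ (x : Fin m) (e : Fin n), Δ x e ≠ 0 → x = a e ∨ x = b e := by
    intro x e hx
    by_contra h
    push_neg at h
    exact hx (h0 e x h.1 h.2)
  have hsum : ∀ (F : Fin m → ℤ) (e : Fin n),
      (∑ x, F x * Δ x e) = F (a e) - F (b e) := by
    intro F e
    rw [Finset.sum_eq_add (a e) (b e) (hab e)
      (fun c _ hc => by rw [h0 e c hc.1 hc.2, mul_zero])
      (fun hc => absurd (Finset.mem_univ _) hc)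
      (fun hc => absurd (Finset.mem_univ _) hc), ha e, hb e]
    ring
  -- spanning enumeration
  have hadj : ∀ {x y : Fin m},
      (SimpleGraph.fromRel
        (fun t t' : Fin m => ∃ e : Fin n, Δ t e ≠ 0 ∧ Δ t' e ≠ 0)).Adj x y →
      ∃ e, Δ x e ≠ 0 ∧ Δ y e ≠ 0 := by
    intro x y hxy
    rcases hxy.2 with h | h
    · exact h
    · obtain ⟨e, h1, h2⟩ := h; exact ⟨e, h2, h1⟩
  have key : ∀ k : ℕ, k ≤ m → ∃ w : Fin k → Fin m, Function.Injective w ∧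
      ∀ q : Fin k, 0 < q.val → ∃ (e : Fin n) (p : Fin k), p.val < q.val ∧
        Δ (w q) e ≠ 0 ∧ Δ (w p) e ≠ 0 := by
    intro k
    induction k with
    | zero =>
      intro _
      exact ⟨fun q => absurd q.isLt (by omega), fun q => absurd q.isLt (by omega),
        fun q => absurd q.isLt (by omega)⟩
    | succ k ih =>
      intro hk
      rcases Nat.eq_zero_or_pos k with rfl | hkpos
      · refine ⟨fun _ => ⟨0, hm⟩, fun x y _ => Fin.ext (by omega), fun q hq => ?_⟩
        have := q.isLt; omega
      · obtain ⟨w, hwinj, hwspan⟩ := ih (by omega)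
        have hnsurj : ¬ Function.Surjective w := by
          intro hs
          have := Fintype.card_le_of_surjective w hs
          simp only [Fintype.card_fin] at this
          omega
        unfold Function.Surjective at hnsurj
        push_neg at hnsurj
        obtain ⟨y, hy⟩ := hnsurj
        obtain ⟨walk⟩ := hconn.preconnected (w ⟨0, hkpos⟩) y
        obtain ⟨u, v, hu, hv, huv⟩ := exists_cross_edge (S := Set.range w) walk
          ⟨⟨0, hkpos⟩, rfl⟩ (fun ⟨x, hx⟩ => hy x hx)
        obtain ⟨e, heu, hev⟩ := hadj huv
        obtain ⟨pu, hpu⟩ := hu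
        have hvnr : ∀ x : Fin k, w x ≠ v := by
          intro x hx
          exact hv ⟨x, hx⟩
        refine ⟨fun q => if h : q.val < k then w ⟨q.val, h⟩ else v, ?_, ?_⟩
        · intro x y hxy
          dsimp only at hxy
          by_cases hx : x.val < k <;> by_cases hy' : y.val < k
          · rw [dif_pos hx, dif_pos hy'] at hxy
            have hval := congrArg Fin.val (hwinj hxy)
            exact Fin.ext hval
          · rw [dif_pos hx, dif_neg hy'] at hxy
            exact absurd hxy (hvnr _)
          · rw [dif_neg hx, dif_pos hy'] at hxy
            exact absurd hxy.symm (hvnr _)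
          · exact Fin.ext (by have := x.isLt; have := y.isLt; omega)
        · intro q hq
          by_cases h : q.val < k
          · obtain ⟨e', p', hp', h1, h2⟩ := hwspan ⟨q.val, h⟩ hq
            refine ⟨e', ⟨p'.val, by omega⟩, by simpa using hp', ?_, ?_⟩
            · dsimp only; rw [dif_pos h]; exact h1
            · dsimp only; rw [dif_pos (show (p' : ℕ) < k from p'.isLt)]; exact h2
          · have hqk : q.val = k := by have := q.isLt; omega
            refine ⟨e, ⟨pu.val, by omega⟩, by simp [hqk], ?_, ?_⟩
            · dsimp only; rw [dif_neg h]; exact hev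
            · dsimp only; rw [dif_pos (show (pu : ℕ) < k from pu.isLt), hpu]
              exact heu
  obtain ⟨ver, hvinj, hvspan⟩ := key m le_rfl
  choose edgF parF hplt hDq hDp using hvspan
  set par : ℕ → ℕ := fun q => if h : q < m ∧ 0 < q then (parF ⟨q, h.1⟩ h.2).val else 0
    with hpardef
  set s : ℕ → ℤ :=
    fun q => if h : q < m ∧ 0 < q then Δ (ver ⟨q, h.1⟩) (edgF ⟨q, h.1⟩ h.2) else 0
    with hsdef
  have hpar : ∀ q, 0 < q → par q < q := by
    intro q hq
    by_cases h : q < m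
    · have h' : q < m ∧ 0 < q := ⟨h, hq⟩
      simp only [hpardef]
      rw [dif_pos h']
      exact hplt _ _
    · have h' : ¬ (q < m ∧ 0 < q) := fun hc => h hc.1
      simp only [hpardef]
      rw [dif_neg h']
      exact hq
  have hpar_eq : ∀ (q : Fin m) (hq : 0 < q.val), par q.val = (parF q hq).val := by
    intro q hq
    have h' : q.val < m ∧ 0 < q.val := ⟨q.isLt, hq⟩
    simp only [hpardef]
    rw [dif_pos h']
  have hs_eq : ∀ (q : Fin m) (hq : 0 < q.val), s q.val = Δ (ver q) (edgF q hq) := by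
    intro q hq
    have h' : q.val < m ∧ 0 < q.val := ⟨q.isLt, hq⟩
    simp only [hsdef]
    rw [dif_pos h']
  have hsmem : ∀ k, s k = -1 ∨ s k = 0 ∨ s k = 1 := by
    intro k
    simp only [hsdef]
    by_cases h : k < m ∧ 0 < k
    · rw [dif_pos h]; exact hΔmem _ _
    · rw [dif_neg h]; right; left; rfl
  have hvbij : Function.Bijective ver := ⟨hvinj, Finite.surjective_of_injective hvinj⟩
  set vE : Fin m ≃ Fin m := Equiv.ofBijective ver hvbij with hvE
  set pos : Fin m → ℕ := fun x => (vE.symm x).val with hposdef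
  have hpos_ver : ∀ q : Fin m, pos (ver q) = q.val := by
    intro q
    simp only [hposdef]
    have : vE.symm (ver q) = q := by
      rw [hvE]; exact Equiv.ofBijective_symm_apply_apply ver hvbij q
    rw [this]
  set c : Fin m → ℕ → ℤ := fun x k => pathvec par s (pos x) k with hcdef
  have hcmem : ∀ (x : Fin m) (k : ℕ), c x k = 0 ∨ c x k = s k := by
    intro x k
    exact pathvec_mem par s (pos x) k
  have hcroot : ∀ k, 0 < k → c (ver ⟨0, hm⟩) k = 0 := by
    intro k hk
    simp only [hcdef]
    rw [hpos_ver ⟨0, hm⟩]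
    exact pathvec_eq_zero_of_lt par s 0 k hk
  have hstep : ∀ (q : Fin m) (hq : 0 < q.val) (k : ℕ),
      c (ver q) k = c (ver (parF q hq)) k + if k = q.val then s q.val else 0 := by
    intro q hq k
    simp only [hcdef]
    rw [hpos_ver q, hpos_ver (parF q hq)]
    rw [pathvec_step par s q.val hq (hpar _ hq) k, hpar_eq q hq]
  have hends : ∀ (q : Fin m) (hq : 0 < q.val),
      (a (edgF q hq) = ver q ∧ b (edgF q hq) = ver (parF q hq)) ∨
      (b (edgF q hq) = ver q ∧ a (edgF q hq) = ver (parF q hq)) := by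
    intro q hq
    have h1 := hsupp _ _ (hDq q hq)
    have h2 := hsupp _ _ (hDp q hq)
    have hne : ver q ≠ ver (parF q hq) := by
      intro h
      have h' := congrArg Fin.val (hvinj h)
      have := hplt q hq
      omega
    rcases h1 with h1 | h1 <;> rcases h2 with h2 | h2
    · exact absurd (h1.trans h2.symm) hne
    · exact Or.inl ⟨h1.symm, h2.symm⟩
    · exact Or.inr ⟨h1.symm, h2.symm⟩
    · exact absurd (h1.trans h2.symm) hne
  have hDtree : ∀ (q : Fin m) (hq : 0 < q.val) (k : ℕ),
      c (a (edgF q hq)) k - c (b (edgF q hq)) k = if k = q.val then 1 else 0 := by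
    intro q hq k
    rcases hends q hq with ⟨h1, h2⟩ | ⟨h1, h2⟩
    · have hd1 : Δ (ver q) (edgF q hq) = 1 := by rw [← h1]; exact ha _
      rw [h1, h2, hstep q hq k, hs_eq q hq, hd1]
      ring
    · have hd1 : Δ (ver q) (edgF q hq) = -1 := by rw [← h1]; exact hb _
      rw [h1, h2, hstep q hq k, hs_eq q hq, hd1]
      split_ifs <;> ring
  have hedg_le : ∀ (r r' : Fin m) (hr : 0 < r.val) (hr' : 0 < r'.val),
      edgF r hr = edgF r' hr' → r'.val ≤ r.val := by
    intro r r' hr hr' he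
    have h1 : Δ (ver r') (edgF r hr) ≠ 0 := by rw [he]; exact hDq r' hr'
    have h2 := hsupp _ _ h1
    have h3 : ver r' = ver r ∨ ver r' = ver (parF r hr) := by
      rcases hends r hr with ⟨ha1, hb1⟩ | ⟨hb1, ha1⟩ <;> rcases h2 with h2 | h2
      · exact Or.inl (h2.trans ha1)
      · exact Or.inr (h2.trans hb1)
      · exact Or.inr (h2.trans ha1)
      · exact Or.inl (h2.trans hb1)
    rcases h3 with h3 | h3
    · exact le_of_eq (congrArg Fin.val (hvinj h3))
    · have h4 := congrArg Fin.val (hvinj h3)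
      have := hplt r hr
      omega
  have hedg_inj : ∀ (q q' : Fin m) (hq : 0 < q.val) (hq' : 0 < q'.val),
      edgF q hq = edgF q' hq' → q = q' := by
    intro q q' hq hq' he
    have l1 := hedg_le q q' hq hq' he
    have l2 := hedg_le q' q hq' hq he.symm
    exact Fin.ext (le_antisymm l2 l1)
  set f : Fin (m - 1) → Fin n :=
    fun k => edgF ⟨k.val + 1, by have := k.isLt; omega⟩ (Nat.succ_pos _) with hfdef
  have hfinj : Function.Injective f := by
    intro k k' hkk
    simp only [hfdef] at hkk
    have := hedg_inj _ _ (Nat.succ_pos _) (Nat.succ_pos _) hkk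
    have hval : k.val + 1 = k'.val + 1 := congrArg Fin.val this
    exact Fin.ext (by omega)
  have hcard : m - 1 ≤ n := by
    have := Fintype.card_le_of_injective f hfinj
    simpa using this
  set Dn : ℕ → Fin n → ℤ := fun k e => c (a e) (k + 1) - c (b e) (k + 1) with hDndef
  have hDn_mem : ∀ k e, Dn k e = -1 ∨ Dn k e = 0 ∨ Dn k e = 1 := by
    intro k e
    simp only [hDndef]
    rcases hcmem (a e) (k + 1) with h1 | h1 <;> rcases hcmem (b e) (k + 1) with h2 | h2 <;>
      rcases hsmem (k + 1) with h3 | h3 | h3 <;> rw [h1, h2] <;> omega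
  have hDn_tree : ∀ (k : ℕ) (j : Fin (m - 1)), Dn k (f j) = if k = j.val then 1 else 0 := by
    intro k j
    simp only [hDndef, hfdef]
    rw [hDtree ⟨j.val + 1, by have := j.isLt; omega⟩ (Nat.succ_pos _) (k + 1)]
    simp
  -- permutation
  set p1 : {j : Fin n // j.val < m - 1} ≃ Fin (m - 1) :=
    { toFun := fun j => ⟨j.val.val, j.2⟩
      invFun := fun k => ⟨⟨k.val, by have := k.isLt; omega⟩, k.isLt⟩
      left_inv := fun j => rfl
      right_inv := fun k => rfl } with hp1
  set eL : {j : Fin n // j.val < m - 1} ≃ {e : Fin n // e ∈ Set.range f} :=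
    p1.trans (Equiv.ofInjective f hfinj) with heL
  have hcard2 : Fintype.card {j : Fin n // ¬ j.val < m - 1} =
      Fintype.card {e : Fin n // ¬ e ∈ Set.range f} := by
    have c1 : Fintype.card {j : Fin n // j.val < m - 1} = m - 1 := by
      rw [Fintype.card_congr p1, Fintype.card_fin]
    have c2 : Fintype.card {e : Fin n // e ∈ Set.range f} = m - 1 := by
      rw [← Fintype.card_congr eL, c1]
    rw [Fintype.card_subtype_compl, Fintype.card_subtype_compl, c1, c2]
  set g0 : {j : Fin n // ¬ j.val < m - 1} ≃ {e : Fin n // ¬ e ∈ Set.range f} :=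
    Fintype.equivOfCardEq hcard2 with hg0
  set π : Fin n ≃ Fin n :=
    ((Equiv.sumCompl (fun j : Fin n => j.val < m - 1)).symm.trans
      ((eL.sumCongr g0).trans (Equiv.sumCompl (fun e : Fin n => e ∈ Set.range f)))) with hpi
  have hπ_lt : ∀ (j : Fin n) (h : j.val < m - 1), π j = f ⟨j.val, h⟩ := by
    intro j h
    simp only [hpi, Equiv.trans_apply]
    rw [Equiv.sumCompl_symm_apply_of_pos (p := fun j : Fin n => j.val < m - 1) (a := j) h]
    simp [heL, hp1]
  have hπ_ge : ∀ (j : Fin n) (h : ¬ j.val < m - 1), π j ∉ Set.range f := by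
    intro j h
    simp only [hpi, Equiv.trans_apply]
    rw [Equiv.sumCompl_symm_apply_of_neg (p := fun j : Fin n => j.val < m - 1) (a := j) h]
    simp only [Equiv.sumCongr_apply, Sum.map_inr, Equiv.sumCompl_apply_inr]
    exact (g0 ⟨j, h⟩).2
  -- matrices
  obtain ⟨U, hUdef⟩ : ∃ U' : Matrix (Fin m) (Fin m) ℤ,
      U' = Matrix.of (fun i x => if i.val + 1 < m then c x (i.val + 1) else 1) := ⟨_, rfl⟩
  obtain ⟨Uinv, hUidef⟩ : ∃ U' : Matrix (Fin m) (Fin m) ℤ,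
      U' = Matrix.of (fun x i => if h : i.val + 1 < m then Δ x (f ⟨i.val, by omega⟩)
        else if x = ver ⟨0, hm⟩ then 1 else 0) := ⟨_, rfl⟩
  have hU_mem : ∀ i x, U i x = -1 ∨ U i x = 0 ∨ U i x = 1 := by
    intro i x
    simp only [hUdef, Matrix.of_apply]
    split_ifs with h
    · rcases hcmem x (i.val + 1) with h1 | h1 <;> rcases hsmem (i.val + 1) with h3 | h3 | h3 <;>
        rw [h1] <;> omega
    · right; right; rfl
  have hUinv_mem : ∀ x i, Uinv x i = -1 ∨ Uinv x i = 0 ∨ Uinv x i = 1 := by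
    intro x i
    simp only [hUidef, Matrix.of_apply]
    split_ifs with h h2
    · exact hΔmem _ _
    · right; right; rfl
    · right; left; rfl
  have hUΔ : ∀ (i : Fin m) (e : Fin n),
      (U * Δ) i e = if i.val + 1 < m then Dn i.val e else 0 := by
    intro i e
    rw [Matrix.mul_apply, hsum (fun x => U i x) e]
    simp only [hUdef, Matrix.of_apply, hDndef]
    split_ifs with h
    · rfl
    · ring
  have hUUinv : U * Uinv = 1 := by
    ext i i'
    rw [Matrix.mul_apply]
    by_cases h' : i'.val + 1 < m
    · have he : ∀ x, Uinv x i' = Δ x (f ⟨i'.val, by omega⟩) := by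
        intro x
        simp only [hUidef, Matrix.of_apply]
        rw [dif_pos h']
      simp_rw [he]
      rw [hsum (fun x => U i x) (f ⟨i'.val, by omega⟩)]
      simp only [hUdef, Matrix.of_apply]
      by_cases h : i.val + 1 < m
      · rw [if_pos h, if_pos h]
        have : c (a (f ⟨i'.val, by omega⟩)) (i.val + 1) - c (b (f ⟨i'.val, by omega⟩)) (i.val + 1)
            = Dn i.val (f ⟨i'.val, by omega⟩) := by simp [hDndef]
        rw [this, hDn_tree i.val ⟨i'.val, by omega⟩]
        rw [Matrix.one_apply]
        by_cases hii : i = i'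
        · rw [if_pos hii, if_pos (by rw [hii])]
        · rw [if_neg hii, if_neg (by intro hc; exact hii (Fin.ext hc))]
      · rw [if_neg h, if_neg h]
        rw [Matrix.one_apply_ne (by intro hc; rw [hc] at h; exact h h')]
        ring
    · have he : ∀ x, Uinv x i' = if x = ver ⟨0, hm⟩ then 1 else 0 := by
        intro x
        simp only [hUidef, Matrix.of_apply]
        rw [dif_neg h']
      simp_rw [he, mul_ite, mul_one, mul_zero]
      rw [Finset.sum_ite_eq' Finset.univ (ver ⟨0, hm⟩) (fun x => U i x),
        if_pos (Finset.mem_univ _)]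
      simp only [hUdef, Matrix.of_apply]
      by_cases h : i.val + 1 < m
      · rw [if_pos h, hcroot (i.val + 1) (Nat.succ_pos _),
          Matrix.one_apply_ne (by intro hc; rw [hc] at h; exact h' h)]
      · rw [if_neg h]
        have hii : i = i' := Fin.ext (by have := i.isLt; have := i'.isLt; omega)
        simp [Matrix.one_apply, hii]
  have hUinvU : Uinv * U = 1 := mul_eq_one_comm.mp hUUinv
  obtain ⟨S, hSdef⟩ : ∃ S' : Matrix (Fin n) (Fin n) ℤ,
      S' = Matrix.of (fun p j =>
        if p.val < m - 1 ∧ ¬ j.val < m - 1 then -Dn p.val (π j) else 0) := ⟨_, rfl⟩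
  have hSS : S * S = 0 := by
    ext p j
    rw [Matrix.mul_apply, Matrix.zero_apply]
    apply Finset.sum_eq_zero
    intro q _
    simp only [hSdef, Matrix.of_apply]
    by_cases h : q.val < m - 1
    · rw [if_neg (fun hc : p.val < m - 1 ∧ ¬ q.val < m - 1 => hc.2 h), zero_mul]
    · have h2 : (if q.val < m - 1 ∧ ¬ j.val < m - 1 then -Dn q.val (π j) else 0) = 0 :=
        if_neg (fun hc => h hc.1)
      rw [h2, mul_zero]
  obtain ⟨V, hVdef⟩ : ∃ V' : Matrix (Fin n) (Fin n) ℤ,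
      V' = (π.symm.toPEquiv.toMatrix : Matrix (Fin n) (Fin n) ℤ) * (1 + S) := ⟨_, rfl⟩
  obtain ⟨W, hWdef⟩ : ∃ W' : Matrix (Fin n) (Fin n) ℤ,
      W' = ((1 : Matrix (Fin n) (Fin n) ℤ) - S) * π.toPEquiv.toMatrix := ⟨_, rfl⟩
  have hPP : (π.symm.toPEquiv.toMatrix : Matrix (Fin n) (Fin n) ℤ) * π.toPEquiv.toMatrix = 1 := by
    rw [← PEquiv.toMatrix_trans, ← Equiv.toPEquiv_trans, Equiv.symm_trans_self,
      Equiv.toPEquiv_refl, PEquiv.toMatrix_refl]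
  have hPP' : (π.toPEquiv.toMatrix : Matrix (Fin n) (Fin n) ℤ) * π.symm.toPEquiv.toMatrix = 1 := by
    rw [← PEquiv.toMatrix_trans, ← Equiv.toPEquiv_trans, Equiv.self_trans_symm,
      Equiv.toPEquiv_refl, PEquiv.toMatrix_refl]
  have hTT1 : ((1 : Matrix (Fin n) (Fin n) ℤ) + S) * (1 - S) = 1 := by
    rw [mul_sub, mul_one, add_mul, one_mul, hSS, add_zero, add_sub_cancel_right]
  have hTT2 : ((1 : Matrix (Fin n) (Fin n) ℤ) - S) * (1 + S) = 1 := by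
    rw [sub_mul, one_mul, mul_add, mul_one, hSS, add_zero, add_sub_cancel_right]
  have hVW : V * W = 1 := by
    rw [hVdef, hWdef, Matrix.mul_assoc, ← Matrix.mul_assoc (1 + S), hTT1, one_mul, hPP]
  have hWV : W * V = 1 := by
    rw [hVdef, hWdef, Matrix.mul_assoc, ← Matrix.mul_assoc (π.toPEquiv.toMatrix), hPP',
      one_mul, hTT2]
  have hV_app : ∀ e j, V e j = ((1 : Matrix (Fin n) (Fin n) ℤ) + S) (π.symm e) j := by
    intro e j
    rw [hVdef, PEquiv.toMatrix_toPEquiv_mul, Matrix.submatrix_apply]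
    rfl
  have hW_app : ∀ j e, W j e = ((1 : Matrix (Fin n) (Fin n) ℤ) - S) j (π.symm e) := by
    intro j e
    rw [hWdef, PEquiv.mul_toMatrix_toPEquiv, Matrix.submatrix_apply]
    rfl
  have hT1_mem : ∀ p q, ((1 : Matrix (Fin n) (Fin n) ℤ) + S) p q = -1 ∨
      ((1 : Matrix (Fin n) (Fin n) ℤ) + S) p q = 0 ∨
      ((1 : Matrix (Fin n) (Fin n) ℤ) + S) p q = 1 := by
    intro p q
    rw [Matrix.add_apply]
    simp only [hSdef, Matrix.of_apply]
    by_cases hc : p.val < m - 1 ∧ ¬ q.val < m - 1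
    · rw [if_pos hc, Matrix.one_apply_ne (Fin.ne_of_val_ne (by omega)), zero_add]
      rcases hDn_mem p.val (π q) with h | h | h <;> omega
    · rw [if_neg hc, add_zero, Matrix.one_apply]
      split_ifs
      · right; right; rfl
      · right; left; rfl
  have hT2_mem : ∀ p q, ((1 : Matrix (Fin n) (Fin n) ℤ) - S) p q = -1 ∨
      ((1 : Matrix (Fin n) (Fin n) ℤ) - S) p q = 0 ∨
      ((1 : Matrix (Fin n) (Fin n) ℤ) - S) p q = 1 := by
    intro p q
    rw [Matrix.sub_apply]
    simp only [hSdef, Matrix.of_apply]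
    by_cases hc : p.val < m - 1 ∧ ¬ q.val < m - 1
    · rw [if_pos hc, Matrix.one_apply_ne (Fin.ne_of_val_ne (by omega)), zero_sub, neg_neg]
      exact hDn_mem p.val (π q)
    · rw [if_neg hc, sub_zero, Matrix.one_apply]
      split_ifs
      · right; right; rfl
      · right; left; rfl
  have hmain : U * Δ * V = Matrix.of (fun (i : Fin m) (j : Fin n) =>
      if (i : ℕ) = (j : ℕ) ∧ (i : ℕ) < m - 1 then (1 : ℤ) else 0) := by
    have hMP : ∀ (i : Fin m) (p : Fin n),
        (U * Δ * (π.symm.toPEquiv.toMatrix : Matrix (Fin n) (Fin n) ℤ)) i p =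
          if i.val + 1 < m then Dn i.val (π p) else 0 := by
      intro i p
      rw [PEquiv.mul_toMatrix_toPEquiv, Matrix.submatrix_apply, Equiv.symm_symm]
      exact hUΔ i (π p)
    rw [hVdef, ← Matrix.mul_assoc]
    ext i j
    rw [Matrix.mul_apply]
    simp_rw [hMP]
    by_cases hi : i.val + 1 < m
    · simp_rw [if_pos hi]
      by_cases hj : j.val < m - 1
      · have hTz : ∀ p : Fin n,
            ((1 : Matrix (Fin n) (Fin n) ℤ) + S) p j = if p = j then 1 else 0 := by
          intro p
          rw [Matrix.add_apply, Matrix.one_apply]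
          simp only [hSdef, Matrix.of_apply]
          rw [if_neg (fun hc : p.val < m - 1 ∧ ¬ j.val < m - 1 => hc.2 hj), add_zero]
        simp_rw [hTz, mul_ite, mul_one, mul_zero]
        rw [Finset.sum_ite_eq' Finset.univ j _, if_pos (Finset.mem_univ _)]
        rw [hπ_lt j hj, hDn_tree i.val ⟨j.val, hj⟩, Matrix.of_apply]
        by_cases hij : i.val = j.val
        · rw [if_pos hij, if_pos ⟨hij, by omega⟩]
        · rw [if_neg hij, if_neg (fun hc => hij hc.1)]
      · rw [Matrix.of_apply, if_neg (by intro hc; omega)]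
        have hiln : i.val < n := by omega
        have hne0 : (⟨i.val, hiln⟩ : Fin n) ≠ j :=
          Fin.ne_of_val_ne (show i.val ≠ j.val by omega)
        rw [Finset.sum_eq_add (⟨i.val, hiln⟩ : Fin n) j hne0
          ?_ (fun hc => absurd (Finset.mem_univ _) hc) (fun hc => absurd (Finset.mem_univ _) hc)]
        · have hπi0 : π ⟨i.val, hiln⟩ = f ⟨i.val, by omega⟩ :=
            hπ_lt ⟨i.val, hiln⟩ (show i.val < m - 1 by omega)
          rw [hπi0, hDn_tree i.val ⟨i.val, by omega⟩, if_pos rfl]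
          have h1 : ((1 : Matrix (Fin n) (Fin n) ℤ) + S) ⟨i.val, hiln⟩ j
              = -Dn i.val (π j) := by
            rw [Matrix.add_apply, Matrix.one_apply_ne hne0]
            simp only [hSdef, Matrix.of_apply]
            rw [if_pos ⟨show i.val < m - 1 by omega, hj⟩, zero_add]
          have h2 : ((1 : Matrix (Fin n) (Fin n) ℤ) + S) j j = 1 := by
            rw [Matrix.add_apply, Matrix.one_apply_eq]
            simp only [hSdef, Matrix.of_apply]
            rw [if_neg (fun hc => hj hc.1), add_zero]
          rw [h1, h2]
          ring
        · intro p _ hp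
          by_cases hplt : p.val < m - 1
          · rw [hπ_lt p hplt, hDn_tree i.val ⟨p.val, hplt⟩,
              if_neg (fun hc => hp.1 (Fin.ext (show p.val = i.val from hc.symm))), zero_mul]
          · have hz : ((1 : Matrix (Fin n) (Fin n) ℤ) + S) p j = 0 := by
              rw [Matrix.add_apply, Matrix.one_apply_ne hp.2]
              simp only [hSdef, Matrix.of_apply]
              rw [if_neg (fun hc => hplt hc.1), zero_add]
            rw [hz, mul_zero]
    · simp_rw [if_neg hi, zero_mul]
      rw [Finset.sum_const_zero, Matrix.of_apply,
        if_neg (by have := i.isLt; intro hc; omega)]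
  refine ⟨⟨U, Uinv, hUUinv, hUinvU⟩, ⟨V, W, hVW, hWV⟩, ?_, ?_, ?_, ?_, ?_⟩
  · intro i j
    exact mem3 (hU_mem i j)
  · intro i j
    exact mem3 (hUinv_mem i j)
  · intro e j
    refine mem3 ?_
    show V e j = -1 ∨ V e j = 0 ∨ V e j = 1
    rw [hV_app e j]
    exact hT1_mem _ _
  · intro j e
    refine mem3 ?_
    show W j e = -1 ∨ W j e = 0 ∨ W j e = 1
    rw [hW_app j e]
    exact hT2_mem _ _
  · exact hmain
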